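/- Define, for each natural number j, the polynomial P_j(x) = (1/2^j) Σ_{k=0}^{j} (binom(j,k))^2 (x−1)^{j−k} (x+1)^k. Let n ≥ 1 and let x_1, …, x_n be the n distinct roots of P_n in (−1,1). Then there exist real weights w_1, …, w_n such that for every real polynomial q of degree at most 2n − 1, Σ_{i=1}^{n} w_i q(x_i) = ∫_{−1}^{1} q(x) dx. -/

import Mathlib

/-- The `j`-th Legendre polynomial
`P_j(x) = (1/2^j) ∑_{k=0}^{j} (binom(j,k))^2 (x-1)^{j-k} (x+1)^k`. -/
noncomputable def legP (j : ℕ) : Polynomial ℝ :=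
  ((1 : ℝ) / 2 ^ j) • ∑ k ∈ Finset.range (j + 1),
    ((Nat.choose j k : ℝ) ^ 2) • ((Polynomial.X - 1) ^ (j - k) * (Polynomial.X + 1) ^ k)

open Polynomial

theorem legP_rodrigues (n : ℕ) :
    derivative^[n] (((X : ℝ[X]) - 1) ^ n * ((X : ℝ[X]) + 1) ^ n)
      = ((n.factorial : ℝ) * 2 ^ n) • legP n := by
  have h2 : ((n.factorial : ℝ) * 2 ^ n) • legP n
      = ∑ k ∈ Finset.range (n + 1),
        ((n.factorial : ℝ) * (Nat.choose n k : ℝ) ^ 2) •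
          ((X - 1) ^ (n - k) * ((X : ℝ[X]) + 1) ^ k) := by
    rw [legP, smul_smul, Finset.smul_sum]
    have : (n.factorial : ℝ) * 2 ^ n * ((1:ℝ) / 2 ^ n) = (n.factorial : ℝ) := by
      field_simp
    rw [this]
    exact Finset.sum_congr rfl fun k _ => by rw [smul_smul]
  rw [h2, ← Finset.sum_range_reflect]
  rw [Polynomial.iterate_derivative_mul]
  refine Finset.sum_congr rfl fun k hk => ?_
  rw [Finset.mem_range, Nat.lt_succ_iff] at hk
  have e1 : ((X : ℝ[X]) - 1) = X - C 1 := by simp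
  have e2 : ((X : ℝ[X]) + 1) = X + C 1 := by simp
  rw [e1, e2, Polynomial.iterate_derivative_X_sub_pow, Polynomial.iterate_derivative_X_add_pow]
  have hnk : n + 1 - 1 - k = n - k := by omega
  rw [hnk]
  have hkk : n - (n - k) = k := by omega
  rw [hkk, Nat.choose_symm hk]
  rw [mul_smul_comm, smul_mul_assoc, smul_smul, smul_smul, ← Nat.cast_smul_eq_nsmul ℝ]
  congr 1
  norm_cast
  rw [Nat.descFactorial_eq_factorial_mul_choose, Nat.descFactorial_eq_factorial_mul_choose,
    Nat.choose_symm hk]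
  have := Nat.choose_mul_factorial_mul_factorial hk
  nlinarith [this]

theorem pow_dvd_iterate_derivative (a : ℝ) (p : ℝ[X]) (m : ℕ) (h : (X - C a) ^ m ∣ p) :
    ∀ j, (X - C a) ^ (m - j) ∣ derivative^[j] p := by
  intro j
  induction j generalizing p m with
  | zero => simpa using h
  | succ j ih =>
    obtain ⟨q, rfl⟩ := h
    rw [Function.iterate_succ_apply]
    have : m - (j + 1) = (m - 1) - j := by omega
    rw [this]
    refine ih _ (m - 1) ?_
    rw [derivative_mul, derivative_pow, derivative_X_sub_C, mul_one]
    rcases Nat.eq_zero_or_pos m with hm | hm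
    · simp [hm]
    · have h1 : (X - C a) ^ (m - 1) ∣ C (m : ℝ) * (X - C a) ^ (m - 1) * q :=
        ⟨C (m:ℝ) * q, by ring⟩
      have h2 : (X - C a) ^ (m - 1) ∣ (X - C a) ^ m * derivative q := by
        refine dvd_mul_of_dvd_left (pow_dvd_pow _ ?_) _
        omega
      exact dvd_add h1 h2

theorem eval_iterate_derivative_W (n j : ℕ) (hj : j < n) (c : ℝ) (hc : c = 1 ∨ c = -1) :
    (derivative^[j] (((X : ℝ[X]) - 1) ^ n * ((X : ℝ[X]) + 1) ^ n)).eval c = 0 := by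
  have hdvd : (X - C c) ^ (n - j) ∣ derivative^[j] (((X : ℝ[X]) - 1) ^ n * ((X : ℝ[X]) + 1) ^ n) := by
    refine pow_dvd_iterate_derivative c _ n ?_ j
    rcases hc with rfl | rfl
    · simp only [C_1]; exact dvd_mul_right (((X : ℝ[X]) - 1) ^ n) _
    · have : ((X : ℝ[X]) - C (-1 : ℝ)) = X + 1 := by simp [sub_neg_eq_add]
      rw [this]
      exact dvd_mul_left _ _
  obtain ⟨q, hq⟩ := hdvd
  rw [hq, eval_mul, eval_pow, eval_sub, eval_X, eval_C, sub_self, zero_pow (by omega), zero_mul]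

theorem integral_poly_derivative (p : ℝ[X]) (a b : ℝ) :
    ∫ t in a..b, (derivative p).eval t = p.eval b - p.eval a := by
  refine intervalIntegral.integral_eq_sub_of_hasDerivAt (fun t _ => p.hasDerivAt t) ?_
  exact (p.derivative.continuous).intervalIntegrable _ _

theorem integral_poly_mul_add (f g : ℝ[X]) (a b : ℝ) :
    (∫ t in a..b, (derivative f).eval t * g.eval t)
      + ∫ t in a..b, f.eval t * (derivative g).eval t
      = f.eval b * g.eval b - f.eval a * g.eval a := by
  have h := integral_poly_derivative (f * g) a b
  rw [derivative_mul] at h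
  rw [← intervalIntegral.integral_add
    ((show Continuous fun t => (derivative f).eval t * g.eval t from
      (derivative f).continuous.mul g.continuous).intervalIntegrable _ _)
    ((show Continuous fun t => f.eval t * (derivative g).eval t from
      f.continuous.mul (derivative g).continuous).intervalIntegrable _ _)]
  simpa using h

theorem orth_aux (n : ℕ) : ∀ k, k ≤ n → ∀ g : ℝ[X],
    (∫ t in (-1:ℝ)..1, (derivative^[n] (((X : ℝ[X]) - 1) ^ n * ((X : ℝ[X]) + 1) ^ n)).eval t * g.eval t)
      = (-1:ℝ)^k * ∫ t in (-1:ℝ)..1,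
          (derivative^[n-k] (((X : ℝ[X]) - 1) ^ n * ((X : ℝ[X]) + 1) ^ n)).eval t
            * (derivative^[k] g).eval t := by
  set W : ℝ[X] := ((X : ℝ[X]) - 1) ^ n * ((X : ℝ[X]) + 1) ^ n with hW
  intro k
  induction k with
  | zero => intro _ g; simp
  | succ k ih =>
    intro hk g
    rw [ih (by omega) g]
    have hnk : n - k = (n - (k + 1)) + 1 := by omega
    set f := derivative^[n - (k + 1)] W with hf
    have h1 : derivative^[n - k] W = derivative f := by
      rw [hnk, hf, Function.iterate_succ_apply']
    have h2 : derivative^[k+1] g = derivative (derivative^[k] g) :=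
      Function.iterate_succ_apply' _ _ _
    have hibp := integral_poly_mul_add f (derivative^[k] g) (-1) 1
    have hb1 : f.eval 1 = 0 := eval_iterate_derivative_W n _ (by omega) 1 (Or.inl rfl)
    have hb2 : f.eval (-1) = 0 := eval_iterate_derivative_W n _ (by omega) (-1) (Or.inr rfl)
    rw [hb1, hb2, zero_mul, zero_mul, sub_zero] at hibp
    rw [h1, h2]
    have : (∫ t in (-1:ℝ)..1, (derivative f).eval t * (derivative^[k] g).eval t)
        = - ∫ t in (-1:ℝ)..1, f.eval t * (derivative (derivative^[k] g)).eval t := by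
      linarith
    rw [this]
    ring

theorem legP_orthogonal (n : ℕ) (g : ℝ[X]) (hg : g.natDegree < n) :
    ∫ t in (-1:ℝ)..1, (legP n).eval t * g.eval t = 0 := by
  have h := orth_aux n n le_rfl g
  rw [Polynomial.iterate_derivative_eq_zero hg] at h
  simp only [Nat.sub_self, Function.iterate_zero_apply, eval_zero, mul_zero,
    intervalIntegral.integral_zero, mul_zero] at h
  rw [legP_rodrigues] at h
  have hrw : ∀ t : ℝ, ((((n.factorial : ℝ) * 2 ^ n) • legP n).eval t) * g.eval t
      = ((n.factorial : ℝ) * 2 ^ n) * ((legP n).eval t * g.eval t) := by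
    intro t; simp [eval_smul]; ring
  simp only [hrw] at h
  rw [intervalIntegral.integral_const_mul] at h
  have hc : ((n.factorial : ℝ) * 2 ^ n) ≠ 0 := by positivity
  exact (mul_eq_zero.mp h).resolve_left hc

theorem prod_X_sub_C_dvd_of_eval_zero {n : ℕ} (x : Fin n → ℝ) (hx : Function.Injective x)
    (p : ℝ[X]) (hp0 : p ≠ 0) (hp : ∀ i, p.eval (x i) = 0) :
    (∏ i : Fin n, (X - C (x i))) ∣ p := by
  have heq : (∏ i : Fin n, (X - C (x i)))
      = ((Finset.univ.val.map x).map fun a => X - C a).prod := by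
    simp [Finset.prod, Multiset.map_map, Function.comp_def]
  rw [heq, Multiset.prod_X_sub_C_dvd_iff_le_roots hp0]
  refine (Multiset.le_iff_subset ((Finset.univ.nodup.map hx))).mpr ?_
  intro a ha
  obtain ⟨i, _, rfl⟩ := Multiset.mem_map.mp ha
  rw [mem_roots hp0]
  exact hp i

theorem legP_eval_one (n : ℕ) : (legP n).eval 1 = 1 := by
  rw [legP]
  rw [eval_smul, eval_finset_sum]
  rw [Finset.sum_eq_single n]
  · norm_num
  · intro k hk hkn
    rw [Finset.mem_range, Nat.lt_succ_iff] at hk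
    simp [zero_pow (show n - k ≠ 0 by omega)]
  · intro h
    exact absurd (Finset.self_mem_range_succ n) h

theorem legP_natDegree_le (n : ℕ) : (legP n).natDegree ≤ n := by
  refine (natDegree_smul_le _ _).trans ?_
  refine natDegree_sum_le_of_forall_le _ _ fun k hk => ?_
  rw [Finset.mem_range, Nat.lt_succ_iff] at hk
  refine (natDegree_smul_le _ _).trans ?_
  refine (natDegree_mul_le).trans ?_
  have h1 : ((X : ℝ[X]) - 1).natDegree = 1 := by
    simpa using natDegree_X_sub_C (1 : ℝ)
  have h2 : ((X : ℝ[X]) + 1).natDegree = 1 := by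
    simpa using natDegree_X_add_C (1 : ℝ)
  rw [natDegree_pow, natDegree_pow, h1, h2]
  omega

theorem legP_eq_C_mul_prod {n : ℕ} (x : Fin n → ℝ) (hx : Function.Injective x)
    (hroot : ∀ i, (legP n).eval (x i) = 0) :
    ∃ a : ℝ, a ≠ 0 ∧ legP n = C a * ∏ i : Fin n, (X - C (x i)) := by
  have hne : legP n ≠ 0 := fun h => by simpa [h] using legP_eval_one n
  obtain ⟨h, hh⟩ := prod_X_sub_C_dvd_of_eval_zero x hx (legP n) hne hroot
  have hω0 : (∏ i : Fin n, (X - C (x i))) ≠ 0 := by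
    refine Finset.prod_ne_zero_iff.mpr fun i _ => X_sub_C_ne_zero _
  have hh0 : h ≠ 0 := fun h0 => by rw [h0, mul_zero] at hh; exact hne hh
  have hωdeg : (∏ i : Fin n, (X - C (x i))).natDegree = n := by
    rw [natDegree_prod _ _ fun i _ => X_sub_C_ne_zero _]
    simp
  have hdeg : (legP n).natDegree = (∏ i : Fin n, (X - C (x i))).natDegree + h.natDegree := by
    rw [hh, natDegree_mul hω0 hh0]
  have hhdeg : h.natDegree = 0 := by
    have := legP_natDegree_le n
    omega
  obtain ⟨a, rfl⟩ := natDegree_eq_zero.mp hhdeg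
  refine ⟨a, fun ha => ?_, by rw [hh, mul_comm]⟩
  rw [ha, map_zero, mul_zero] at hh
  exact hne hh

/-- Gaussian quadrature at the Legendre nodes: if `x_1, …, x_n` are the `n` distinct
roots of `P_n` in `(-1,1)`, there exist weights `w_1, …, w_n` such that
`∑ w_i q(x_i) = ∫_{-1}^{1} q` for every polynomial `q` of degree at most `2n - 1`. -/
theorem gaussian_quadrature_exactness (n : ℕ) (hn : 1 ≤ n)
    (x : Fin n → ℝ) (hx : Function.Injective x)
    (hroot : ∀ i, (legP n).eval (x i) = 0)
    (hmem : ∀ i, x i ∈ Set.Ioo (-1 : ℝ) 1) :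
    ∃ w : Fin n → ℝ, ∀ q : Polynomial ℝ, q.degree ≤ (2 * n - 1 : ℕ) →
      ∑ i : Fin n, w i * q.eval (x i) = ∫ t in (-1 : ℝ)..1, q.eval t := by

  have hinj : Set.InjOn x ↑(Finset.univ : Finset (Fin n)) := hx.injOn
  obtain ⟨a, ha, hleg⟩ := legP_eq_C_mul_prod x hx hroot
  set ω : ℝ[X] := ∏ i : Fin n, (X - C (x i)) with hω
  refine ⟨fun i => ∫ t in (-1:ℝ)..1, (Lagrange.basis Finset.univ x i).eval t, ?_⟩
  intro q hq
  set r : ℝ[X] := Lagrange.interpolate Finset.univ x (fun i => q.eval (x i)) with hr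
  -- LHS equals integral of interpolant
  have hL : ∑ i : Fin n, (∫ t in (-1:ℝ)..1, (Lagrange.basis Finset.univ x i).eval t)
        * q.eval (x i) = ∫ t in (-1:ℝ)..1, r.eval t := by
    have : ∀ t : ℝ, r.eval t
        = ∑ i : Fin n, q.eval (x i) * (Lagrange.basis Finset.univ x i).eval t := by
      intro t
      rw [hr, Lagrange.interpolate_apply, eval_finset_sum]
      exact Finset.sum_congr rfl fun i _ => by rw [eval_mul, eval_C]
    simp only [this]
    rw [intervalIntegral.integral_finset_sum
      (fun i _ => ((show Continuous fun t => q.eval (x i) * (Lagrange.basis Finset.univ x i).eval t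
        from continuous_const.mul
        (Lagrange.basis Finset.univ x i).continuous).intervalIntegrable _ _))]
    refine Finset.sum_congr rfl fun i _ => ?_
    rw [intervalIntegral.integral_const_mul, mul_comm]
  -- degree of r
  have hrdeg : r.degree < (n : WithBot ℕ) := by
    have := Lagrange.degree_interpolate_lt (fun i => q.eval (x i)) hinj
    rw [Finset.card_univ, Fintype.card_fin] at this
    exact this
  rcases eq_or_ne (q - r) 0 with hqr | hqr
  · have hqr' : q = r := by rwa [sub_eq_zero] at hqr
    rw [hL, hqr']
  · obtain ⟨h, hhd⟩ := prod_X_sub_C_dvd_of_eval_zero x hx (q - r) hqr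
      (fun i => by
        have hnode := Lagrange.eval_interpolate_at_node (r := fun j => q.eval (x j)) hinj
          (Finset.mem_univ i)
        rw [eval_sub, hr, hnode, sub_self])
    have hh0 : h ≠ 0 := fun h0 => by rw [h0, mul_zero] at hhd; exact hqr hhd
    have hω0 : ω ≠ 0 := by
      refine Finset.prod_ne_zero_iff.mpr fun i _ => X_sub_C_ne_zero _
    have hωdeg : ω.natDegree = n := by
      rw [hω, natDegree_prod _ _ fun i _ => X_sub_C_ne_zero _]
      simp
    have hqrdeg : (q - r).natDegree ≤ 2 * n - 1 := by
      refine natDegree_le_iff_degree_le.mpr ?_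
      refine (degree_sub_le _ _).trans (max_le hq ?_)
      refine le_trans (le_of_lt hrdeg) ?_
      have hnn : n ≤ 2 * n - 1 := by omega
      exact_mod_cast hnn
    have hhdeg : h.natDegree < n := by
      have := natDegree_mul hω0 hh0
      rw [← hhd, hωdeg] at this
      omega
    have horth : (∫ t in (-1:ℝ)..1, ω.eval t * h.eval t) = 0 := by
      have hωeq : ∀ t : ℝ, ω.eval t * h.eval t
          = a⁻¹ * ((legP n).eval t * h.eval t) := by
        intro t
        have : (legP n).eval t = a * ω.eval t := by rw [hleg, eval_mul, eval_C]
        rw [this]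
        field_simp
      simp only [hωeq]
      rw [intervalIntegral.integral_const_mul, legP_orthogonal n h hhdeg, mul_zero]
    have hqeq : ∀ t : ℝ, q.eval t = r.eval t + ω.eval t * h.eval t := by
      intro t
      have : q = r + ω * h := by rw [← hhd]; ring
      rw [this, eval_add, eval_mul]
    rw [hL]
    simp only [hqeq]
    rw [intervalIntegral.integral_add (r.continuous.intervalIntegrable _ _)
      ((show Continuous fun t => ω.eval t * h.eval t from
        ω.continuous.mul h.continuous).intervalIntegrable _ _), horth, add_zero]
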